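/- If a Dyck path P has exactly k non-initial contacts, then mir(P) ends with exactly k consecutive down steps, i.e., mir(P) = P' d^k where P' does not end with d (or is empty when appropriate). -/

import Mathlib

/-- A Dyck path: a word in `u = true`, `d = false` with equally many `u`'s and `d`'s,
every prefix of which has at least as many `u`'s as `d`'s. -/
def IsDyck (w : List Bool) : Prop :=
  w.count true = w.count false ∧ ∀ p, p <+: w → p.count false ≤ p.count true

/-- The number of non-initial contacts of a path: the number of nonempty balanced
prefixes. -/
def ncontacts (w : List Bool) : ℕ :=
  ((List.range w.length).filter
    (fun j => (w.take (j + 1)).count true = (w.take (j + 1)).count false)).length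

/-- The involution `mir` on Dyck paths, defined recursively by `mir ε = ε` and
`mir (D₁ u D₂ d) = mir D₂ u mir D₁ d`, where a nonempty Dyck path is uniquely
written `D₁ u D₂ d` with `D₁, D₂` Dyck paths and `D₂` starting right after the
last non-initial contact before the endpoint (so `D₁` is the longest proper
balanced prefix). -/
def mir (w : List Bool) : List Bool :=
  if hw : w = [] then []
  else
    let e := w.dropLast
    let j := ((List.range e.length).filter
      (fun j => (e.take j).count true = (e.take j).count false)).foldr max 0
    mir (e.drop (j + 1)) ++ true :: (mir (e.take j) ++ [false])
termination_by w.length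
decreasing_by
  all_goals
    have hp := List.length_pos_of_ne_nil hw
    simp only [List.length_drop, List.length_take, List.length_dropLast]
    omega

lemma foldr_max_mem_cons (l : List ℕ) : l.foldr max 0 ∈ 0 :: l := by
  induction l with
  | nil => simp
  | cons b t ih =>
    simp only [List.foldr_cons]
    rcases max_choice b (t.foldr max 0) with hm | hm <;> rw [hm]
    · simp
    · rcases List.mem_cons.mp ih with h | h
      · simp [h]
      · simp [h]

lemma le_foldr_max (l : List ℕ) : ∀ a ∈ l, a ≤ l.foldr max 0 := by
  induction l with
  | nil => simp
  | cons b t ih =>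
    intro a ha
    rcases List.mem_cons.mp ha with rfl | ha
    · simp only [List.foldr_cons]; exact le_max_left _ _
    · simp only [List.foldr_cons]; exact le_trans (ih a ha) (le_max_right _ _)

theorem stmt10 (P : List Bool) (h : IsDyck P) :
    ∃ P', mir P = P' ++ List.replicate (ncontacts P) false ∧
      P'.getLast? ≠ some false := by
  suffices H : ∀ n (P : List Bool), P.length ≤ n → IsDyck P →
      ∃ P', mir P = P' ++ List.replicate (ncontacts P) false ∧
        P'.getLast? ≠ some false from H P.length P le_rfl h
  clear h P
  intro n
  induction n with
  | zero =>
    intro P hlen _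
    have : P = [] := List.eq_nil_of_length_eq_zero (Nat.le_zero.mp hlen)
    subst this
    refine ⟨[], ?_, by simp⟩
    rw [mir]
    simp [ncontacts]
  | succ n ih =>
    intro P hlen h
    by_cases hw : P = []
    · subst hw
      refine ⟨[], ?_, by simp⟩
      rw [mir]
      simp [ncontacts]
    · -- last step is false
      set e := P.dropLast with he
      have hlastfalse : P.getLast hw = false := by
        by_contra hlt
        have hlt' : P.getLast hw = true := by
          cases hl : P.getLast hw
          · exact absurd hl hlt
          · rfl
        have hsplit : e ++ [true] = P := by rw [← hlt']; exact List.dropLast_append_getLast hw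
        have h1 := h.1
        have h2 := h.2 e (he ▸ List.dropLast_prefix P)
        rw [← hsplit] at h1
        simp [List.count_append] at h1
        omega
      have hPe : P = e ++ [false] := by
        rw [← hlastfalse]; exact (List.dropLast_append_getLast hw).symm
      have hene : e ≠ [] := by
        intro hnil
        rw [hnil] at hPe
        have := h.2 P (List.prefix_refl P)
        rw [hPe] at this
        simp at this
      have hecount : e.count true = e.count false + 1 := by
        have h1 := h.1
        rw [hPe] at h1
        simp [List.count_append] at h1
        omega
      have heprefix : ∀ p, p <+: e → p.count false ≤ p.count true := by
        intro p hp
        exact h.2 p (hp.trans (hPe ▸ List.prefix_append e [false]))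
      set S := (List.range e.length).filter
        (fun j => decide ((e.take j).count true = (e.take j).count false)) with hS
      set j := S.foldr max 0 with hj
      have h0S : 0 ∈ S := by
        rw [hS]
        refine List.mem_filter.mpr ⟨List.mem_range.mpr (List.length_pos_iff.mpr hene), by simp⟩
      have hjS : j ∈ S := by
        rcases List.mem_cons.mp (foldr_max_mem_cons S) with h0 | hmem
        · rw [hj, h0]; exact h0S
        · exact hmem
      have hjlt : j < e.length := List.mem_range.mp (List.mem_filter.mp hjS).1
      have hjbal : (e.take j).count true = (e.take j).count false :=
        of_decide_eq_true (List.mem_filter.mp hjS).2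
      have hjmax : ∀ i, i < e.length →
          (e.take i).count true = (e.take i).count false → i ≤ j := by
        intro i hi hbal
        exact le_foldr_max S i (List.mem_filter.mpr
          ⟨List.mem_range.mpr hi, decide_eq_true hbal⟩)
      have htakelen : (e.take j).length = j := by
        rw [List.length_take]; omega
      have hD1 : IsDyck (e.take j) := by
        refine ⟨hjbal, fun p hp => heprefix p (hp.trans (List.take_prefix j e))⟩
      -- take of P below e.length agrees with e
      have htakeP : ∀ i, i ≤ e.length → P.take i = e.take i := by
        intro i hi
        rw [hPe, List.take_append_of_le_length hi]
      have hPlen : P.length = e.length + 1 := by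
        rw [hPe]; simp
      -- ncontacts computation
      have hnc : ncontacts P = ncontacts (e.take j) + 1 := by
        unfold ncontacts
        rw [hPlen, htakelen, List.range_succ, List.filter_append]
        have hfull : P.take (e.length + 1) = P := by
          rw [← hPlen]; exact List.take_length
        have hlastfilter : (List.filter
            (fun i => decide ((P.take (i + 1)).count true = (P.take (i + 1)).count false))
            [e.length]) = [e.length] := by
          simp only [List.filter_cons, List.filter_nil]
          rw [hfull]
          simp [h.1]
        rw [hlastfilter]
        have hsplitrange : e.length = j + (e.length - j) := by omega
        rw [hsplitrange, List.range_add, List.filter_append]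
        have hmid : (List.filter
            (fun i => decide ((P.take (i + 1)).count true = (P.take (i + 1)).count false))
            (List.map (fun x => j + x) (List.range (e.length - j)))) = [] := by
          rw [List.filter_eq_nil_iff]
          intro a ha
          rcases List.mem_map.mp ha with ⟨k, hk, rfl⟩
          have hklt := List.mem_range.mp hk
          simp only [decide_eq_true_eq]
          intro hbal
          have hle : j + k + 1 ≤ e.length := by omega
          rw [htakeP _ hle] at hbal
          rcases lt_or_eq_of_le hle with hlt2 | heq2
          · have := hjmax _ hlt2 hbal
            omega
          · rw [heq2, List.take_length] at hbal
            omega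
        rw [hmid]
        have hcongr : (List.filter
            (fun i => decide ((P.take (i + 1)).count true = (P.take (i + 1)).count false))
            (List.range j)) = (List.filter
            (fun i => decide (((e.take j).take (i + 1)).count true = ((e.take j).take (i + 1)).count false))
            (List.range j)) := by
          refine List.filter_congr ?_
          intro i hi
          have hi' := List.mem_range.mp hi
          have h1 : P.take (i+1) = e.take (i+1) := htakeP _ (by omega)
          have h2 : (e.take j).take (i+1) = e.take (i+1) := by
            rw [List.take_take]
            congr 1
            omega
          rw [h1, h2]
        rw [hcongr]
        simp
      -- unfold mir
      have hmir : mir P = mir (e.drop (j + 1)) ++ true :: (mir (e.take j) ++ [false]) := by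
        rw [mir]
        rw [dif_neg hw]
      -- apply IH to e.take j
      have hlen1 : (e.take j).length ≤ n := by
        rw [htakelen]
        have : e.length ≤ n := by
          rw [hPlen] at hlen; omega
        omega
      obtain ⟨P₁, hP1, hP1last⟩ := ih (e.take j) hlen1 hD1
      refine ⟨mir (e.drop (j + 1)) ++ true :: P₁, ?_, ?_⟩
      · rw [hmir, hP1, hnc, List.replicate_succ']
        simp
      · cases P₁ with
        | nil =>
          rw [List.getLast?_append]
          simp
        | cons a t =>
          obtain ⟨x, hx⟩ := Option.isSome_iff_exists.mp
            (List.getLast?_isSome.mpr (List.cons_ne_nil a t))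
          rw [List.getLast?_append, List.getLast?_cons_cons, hx]
          rw [hx] at hP1last
          simpa using hP1last
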